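/- Let G be a connected graph with at least three edges. Then the line graph L(G) is traceable (has a Hamiltonian path) if and only if G has a dominating trail. -/

import Mathlib

open SimpleGraph

namespace Paper

/-- A graph is traceable if it has a hamiltonian path. -/
def Traceable {α : Type*} (G : SimpleGraph α) : Prop :=
  ∃ (a b : α) (p : G.Walk a b), p.IsPath ∧ ∀ w, w ∈ p.support

/-- A graph is hamiltonian if it has a hamiltonian cycle. -/
def HamGraph {α : Type*} (G : SimpleGraph α) : Prop :=
  ∃ (a : α) (p : G.Walk a a), p.IsCycle ∧ ∀ w, w ∈ p.support

/-- A graph together with its (varying) vertex type. -/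
def GraphSys : Type 1 := Σ V : Type, SimpleGraph V

/-- One application of the line-graph operator. -/
def lineStep (p : GraphSys) : GraphSys := ⟨p.2.edgeSet, p.2.lineGraph⟩

/-- The `n`-th iterated line graph (with `L^0(G) = G`). -/
def iterLine (p : GraphSys) (n : ℕ) : GraphSys := lineStep^[n] p

/-- The hamiltonian path index: the least `n` with `L^n(G)` traceable. -/
noncomputable def hp {V : Type} (G : SimpleGraph V) : ℕ :=
  sInf {n | Traceable (iterLine ⟨V, G⟩ n).2}

/-- The hamiltonian index: the least `n` with `L^n(G)` hamiltonian. -/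
noncomputable def hIndex {V : Type} (G : SimpleGraph V) : ℕ :=
  sInf {n | HamGraph (iterLine ⟨V, G⟩ n).2}

/-- Degree of `v` in a subgraph `H` (number of neighbours). -/
noncomputable def sdeg {V : Type*} {G : SimpleGraph V} (H : G.Subgraph) (v : V) : ℕ :=
  (H.neighborSet v).ncard

/-- Degree of `v` in `G` (number of neighbours). -/
noncomputable def gdeg {V : Type*} (G : SimpleGraph V) (v : V) : ℕ :=
  (G.neighborSet v).ncard

/-- `Ē(H)`: the set of edges of `G` incident with a vertex of `H`. -/
def barE {V : Type*} (G : SimpleGraph V) (H : G.Subgraph) : Set (Sym2 V) :=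
  {e | e ∈ G.edgeSet ∧ ∃ v ∈ H.verts, v ∈ e}

/-- A circuit: a connected subgraph in which every vertex has even degree
(`K₁` counts as a circuit). -/
def IsCircuit {V : Type*} {G : SimpleGraph V} (H : G.Subgraph) : Prop :=
  H.Connected ∧ ∀ v, Even (sdeg H v)

/-- A branch of `G`: a nontrivial path whose ends have degree `≠ 2` and whose
internal vertices have degree `2`. -/
def IsBranch {V : Type*} (G : SimpleGraph V) {u v : V} (p : G.Walk u v) : Prop :=
  p.IsPath ∧ 0 < p.length ∧ gdeg G u ≠ 2 ∧ gdeg G v ≠ 2 ∧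
    ∀ w ∈ p.support, w ≠ u → w ≠ v → gdeg G w = 2

/-- The family `EUP_k(G)` of subgraphs satisfying (I'), (II), (III), (IV), (V'). -/
def EUP {V : Type*} (G : SimpleGraph V) (k : ℕ) : Set (G.Subgraph) :=
  {H | {v | Odd (sdeg H v)}.ncard ≤ 2 ∧
    (∀ v ∈ H.verts, H.neighborSet v = ∅ → 3 ≤ gdeg G v) ∧
    (∀ v, 3 ≤ gdeg G v → v ∈ H.verts) ∧
    (∀ H1 : G.Subgraph, H1 ≤ H → H1.verts.Nonempty → (H.verts \ H1.verts).Nonempty →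
      ∃ a ∈ H1.verts, ∃ b ∈ H.verts \ H1.verts, G.dist a b ≤ k - 1) ∧
    (∀ (u v : V) (p : G.Walk u v), IsBranch G p →
      (∀ e ∈ p.edges, e ∉ H.edgeSet) → p.length ≤ k + 1) ∧
    (∀ (u v : V) (p : G.Walk u v), IsBranch G p → (∃ w ∈ p.support, gdeg G w = 1) →
      (∀ e ∈ p.edges, e ∉ H.edgeSet) → p.length ≤ k)}

/-- The family `EU_k(G)` of subgraphs satisfying (I), (II), (III), (IV), (V). -/
def EU {V : Type*} (G : SimpleGraph V) (k : ℕ) : Set (G.Subgraph) :=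
  {H | (∀ v, Even (sdeg H v)) ∧
    (∀ v ∈ H.verts, H.neighborSet v = ∅ → 3 ≤ gdeg G v) ∧
    (∀ v, 3 ≤ gdeg G v → v ∈ H.verts) ∧
    (∀ H1 : G.Subgraph, H1 ≤ H → H1.verts.Nonempty → (H.verts \ H1.verts).Nonempty →
      ∃ a ∈ H1.verts, ∃ b ∈ H.verts \ H1.verts, G.dist a b ≤ k - 1) ∧
    (∀ (u v : V) (p : G.Walk u v), IsBranch G p →
      (∀ e ∈ p.edges, e ∉ H.edgeSet) → p.length ≤ k + 1) ∧
    (∀ (u v : V) (p : G.Walk u v), IsBranch G p → (∃ w ∈ p.support, gdeg G w = 1) →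
      p.length ≤ k)}

/-- two distinct members of a Sym2 determine it -/
lemma sym2_eq {V : Type*} {e : Sym2 V} {v w : V} (hv : v ∈ e) (hw : w ∈ e) (hvw : v ≠ w) :
    e = s(v, w) := by
  induction e using Sym2.ind with
  | _ a b => rw [Sym2.mem_iff] at hv hw; aesop (add simp Sym2.eq_swap)

lemma chain'_of_forall_mem {V : Type*} {u : V} {l : List (Sym2 V)}
    (h : ∀ e ∈ l, u ∈ e) : l.Chain' (fun a b => ∃ x, x ∈ a ∧ x ∈ b) := by
  induction l with
  | nil => exact List.isChain_nil
  | cons e l ih =>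
    cases l with
    | nil => exact List.isChain_singleton _
    | cons f l =>
      refine List.isChain_cons_cons.2 ⟨⟨u, h e (by simp), h f (by simp)⟩, ih ?_⟩
      intro x hx; exact h x (List.mem_cons_of_mem _ hx)

lemma chain'_and_pairwise {α : Type*} {R S : α → α → Prop} : ∀ {l : List α},
    l.Chain' R → l.Pairwise S → l.Chain' (fun a b => R a b ∧ S a b)
  | [], _, _ => List.isChain_nil
  | [a], _, _ => List.isChain_singleton _
  | a :: b :: l, hc, hp => by
    simp only [List.Chain', List.isChain_cons_cons] at hc ⊢
    refine ⟨⟨hc.1, ?_⟩, chain'_and_pairwise hc.2 hp.of_cons⟩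
    exact (List.pairwise_cons.1 hp).1 b (by simp)

lemma walk_of_chain {α : Type*} (H : SimpleGraph α) :
    ∀ (l : List α) (a : α), List.Chain H.Adj a l → ∃ b, ∃ p : H.Walk a b, p.support = a :: l
  | [], a, _ => ⟨a, Walk.nil, by simp⟩
  | b :: l, a, h => by
    obtain ⟨c, p, hp⟩ := walk_of_chain H l b (List.chain_cons.1 h).2
    exact ⟨c, Walk.cons (List.chain_cons.1 h).1 p, by simp [hp]⟩

lemma adj_of_edge {V : Type*} {G : SimpleGraph V} {e : Sym2 V} {v w : V}
    (he : e ∈ G.edgeSet) (hv : v ∈ e) (hw : w ∈ e) (hvw : v ≠ w) : G.Adj v w := by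
  rw [sym2_eq hv hw hvw] at he; exact he

lemma build_trail {V : Type*} {G : SimpleGraph V} :
    ∀ (es : List (Sym2 V)) (v : V), (∀ e ∈ es, e ∈ G.edgeSet) →
    (∀ h : es ≠ [], v ∈ es.head h) →
    es.Chain' (fun a b => ∃ x, x ∈ a ∧ x ∈ b) →
    ∃ w, ∃ W : G.Walk v w, W.edges.Sublist es ∧ ∀ e ∈ es, ∃ x ∈ W.support, x ∈ e
  | [], v, _, _, _ => ⟨v, Walk.nil, by simp, by simp⟩
  | [e], v, _, hh, _ => ⟨v, Walk.nil, by simp, by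
      intro f hf; simp at hf; subst hf
      exact ⟨v, by simp, hh (by simp)⟩⟩
  | e₁ :: e₂ :: es, v, hes, hh, hch => by
    obtain ⟨⟨x, hx1, hx2⟩, hch'⟩ := List.isChain_cons_cons.1 hch
    have hv : v ∈ e₁ := hh (by simp)
    obtain ⟨w, W, hsub, hdom⟩ := build_trail (e₂ :: es) x
      (fun f hf => hes f (List.mem_cons_of_mem _ hf)) (fun _ => hx2) hch'
    by_cases hvx : v = x
    · subst hvx
      exact ⟨w, W, hsub.cons _, fun f hf => by
        rcases List.mem_cons.1 hf with rfl | hf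
        · exact ⟨v, W.start_mem_support, hv⟩
        · exact hdom f hf⟩
    · have hadj : G.Adj v x := adj_of_edge (hes e₁ (by simp)) hv hx1 hvx
      refine ⟨w, Walk.cons hadj W, ?_, ?_⟩
      · rw [Walk.edges_cons, ← sym2_eq hv hx1 hvx]
        exact hsub.cons₂ _
      · intro f hf
        rcases List.mem_cons.1 hf with rfl | hf
        · exact ⟨v, Walk.start_mem_support _, hv⟩
        · obtain ⟨y, hy, hyf⟩ := hdom f hf
          exact ⟨y, by simp [hy], hyf⟩

lemma insert_edges {V : Type*} {G : SimpleGraph V} :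
    ∀ {u v : V} (T : G.Walk u v) (R : List (Sym2 V)),
    (∀ e ∈ R, ∃ x ∈ T.support, x ∈ e) → (∀ e ∈ R, e ∉ T.edges) → R.Nodup → T.IsTrail →
    ∃ l : List (Sym2 V), l.Nodup ∧ (∀ e, e ∈ l ↔ e ∈ R ∨ e ∈ T.edges) ∧
      l.Chain' (fun a b => ∃ x, x ∈ a ∧ x ∈ b) ∧ (∀ f ∈ l.head?, u ∈ f)
  | u, _, Walk.nil, R, hdom, _, hnd, _ => by
    refine ⟨R, hnd, by simp, chain'_of_forall_mem (u := u) ?_, ?_⟩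
    · intro e he; obtain ⟨x, hx, hxe⟩ := hdom e he
      simp at hx; subst hx; exact hxe
    · intro f hf
      obtain ⟨x, hx, hxe⟩ := hdom f (List.mem_of_mem_head? hf)
      simp at hx; subst hx; exact hxe
  | u, v, Walk.cons (v := u') hadj T', R, hdom, hnotin, hnd, htr => by
    classical
    set e0 : Sym2 _ := s(u, u') with he0
    have he0T : e0 ∈ (Walk.cons hadj T').edges := by simp [he0]
    have he0T' : e0 ∉ T'.edges := by
      have := htr.edges_nodup; rw [Walk.edges_cons] at this; exact (List.nodup_cons.1 this).1
    obtain ⟨l', hnd', hmem', hch', hhd'⟩ := insert_edges T' (R.filter (fun e => u ∉ e))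
      (fun e he => by
        obtain ⟨x, hx, hxe⟩ := hdom e (List.mem_of_mem_filter he)
        rw [Walk.support_cons, List.mem_cons] at hx
        rcases hx with rfl | hx
        · exact absurd hxe (by simpa using (List.of_mem_filter he))
        · exact ⟨x, hx, hxe⟩)
      (fun e he hc => hnotin e (List.mem_of_mem_filter he) (by simp [hc]))
      (hnd.filter _) htr.of_cons
    set Ru := R.filter (fun e => u ∈ e) with hRu
    have hRu_mem : ∀ e ∈ Ru, u ∈ e := fun e he => by simpa using List.of_mem_filter he
    have hnotl' : ∀ f ∈ R, f ∉ T'.edges := fun f hf hc =>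
      hnotin f hf (by rw [Walk.edges_cons]; exact List.mem_cons_of_mem _ hc)
    refine ⟨Ru ++ e0 :: l', ?_, ?_, ?_, ?_⟩
    · rw [List.nodup_append]
      refine ⟨hnd.filter _, List.nodup_cons.2 ⟨?_, hnd'⟩, ?_⟩
      · intro hc
        rcases (hmem' e0).1 hc with h | h
        · exact hnotin e0 (List.mem_of_mem_filter h) he0T
        · exact he0T' h
      · intro f hf g hc hfg
        subst hfg
        have hfR : f ∈ R := List.mem_of_mem_filter hf
        rcases List.mem_cons.1 hc with heq | hc'
        · exact hnotin f hfR (heq ▸ he0T)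
        · rcases (hmem' f).1 hc' with h | h
          · exact absurd (hRu_mem f hf) (by simpa using (List.of_mem_filter h))
          · exact hnotl' f hfR h
    · intro e
      simp only [List.mem_append, List.mem_cons, hmem' e, Walk.edges_cons]
      constructor
      · rintro (h | rfl | h | h)
        · exact Or.inl (List.mem_of_mem_filter h)
        · exact Or.inr (by simp [he0])
        · exact Or.inl (List.mem_of_mem_filter h)
        · exact Or.inr (Or.inr h)
      · rintro (h | h)
        · by_cases hu : u ∈ e
          · exact Or.inl (List.mem_filter.2 ⟨h, by simpa using hu⟩)
          · exact Or.inr (Or.inr (Or.inl (List.mem_filter.2 ⟨h, by simpa using hu⟩)))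
        · rcases h with rfl | h
          · exact Or.inr (Or.inl rfl)
          · exact Or.inr (Or.inr (Or.inr h))
    · simp only [List.Chain']
      rw [List.isChain_append]
      refine ⟨chain'_of_forall_mem hRu_mem, ?_, ?_⟩
      · rw [List.isChain_cons]
        exact ⟨fun f hf => ⟨u', by simp [he0], hhd' f hf⟩, hch'⟩
      · intro x hx y hy
        simp only [List.head?_cons, Option.mem_def, Option.some.injEq] at hy
        subst hy
        exact ⟨u, hRu_mem x (List.mem_of_mem_getLast? hx), by simp [he0]⟩
    · intro f hf
      cases hR : Ru with
      | nil => rw [hR] at hf; simp at hf; subst hf; simp [he0]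
      | cons a l =>
        rw [hR, List.cons_append, List.head?_cons] at hf
        simp only [Option.mem_def, Option.some.injEq] at hf; subst hf
        exact hRu_mem a (by rw [hR]; simp)

lemma chain'_pmap {α β : Type*} {R : α → α → Prop} {S : β → β → Prop} {p : α → Prop}
    (f : ∀ a, p a → β) (hf : ∀ a ha b hb, R a b → S (f a ha) (f b hb)) :
    ∀ (l : List α) (h : ∀ a ∈ l, p a), l.Chain' R → (l.pmap f h).Chain' S
  | [], _, _ => List.isChain_nil
  | [a], _, _ => List.isChain_singleton _
  | a :: b :: l, h, hc => by
    simp only [List.Chain', List.isChain_cons_cons] at hc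
    simp only [List.pmap, List.Chain', List.isChain_cons_cons]
    exact ⟨hf _ _ _ _ hc.1, chain'_pmap f hf (b :: l) (fun x hx => h x (List.mem_cons_of_mem _ hx)) hc.2⟩


/-- `L(G)` is traceable iff `G` has a dominating trail. -/
theorem stmt1 {V : Type*} (G : SimpleGraph V) (hG : G.Connected)
    (h3 : 3 ≤ G.edgeSet.ncard) :
    Traceable G.lineGraph ↔
      ∃ (u v : V) (T : G.Walk u v), T.IsTrail ∧
        ∀ e ∈ G.edgeSet, ∃ w ∈ T.support, w ∈ e := by
  classical
  have hfin : G.edgeSet.Finite := by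
    by_contra h
    rw [Set.Infinite.ncard h] at h3; omega
  have hne : G.edgeSet.Nonempty := Set.nonempty_of_ncard_ne_zero (by omega)
  constructor
  · rintro ⟨a, b, p, hp, hall⟩
    set es : List (Sym2 V) := p.support.map Subtype.val with hes
    have hesG : ∀ e ∈ es, e ∈ G.edgeSet := by
      rintro e he; rw [hes, List.mem_map] at he
      obtain ⟨⟨e', he'⟩, _, rfl⟩ := he; exact he'
    have hesnd : es.Nodup := hp.support_nodup.map Subtype.val_injective
    have hch : es.Chain' (fun a b => ∃ x, x ∈ a ∧ x ∈ b) := by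
      rw [hes]; simp only [List.Chain']; rw [List.isChain_map]
      refine (Walk.isChain_adj_support p).imp ?_
      intro a b hab
      obtain ⟨_, x, hx1, hx2⟩ := lineGraph_adj_iff_exists.1 hab
      exact ⟨x, hx1, hx2⟩
    -- starting vertex
    have hesne : es ≠ [] := by
      rw [hes]
      intro hc
      have := congrArg List.length hc
      simp at this
    obtain ⟨w, W, hsub, hdom⟩ := build_trail es (es.head hesne).out.1
      hesG (fun _ => Sym2.out_fst_mem _) hch
    refine ⟨_, w, W, W.isTrail_def.mpr (hsub.nodup hesnd), ?_⟩
    intro e he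
    refine hdom e ?_
    rw [hes, List.mem_map]
    exact ⟨⟨e, he⟩, hall _, rfl⟩
  · rintro ⟨u, v, T, htr, hdom⟩
    set R : List (Sym2 V) := hfin.toFinset.toList.filter (fun e => e ∉ T.edges) with hR
    have hRprop : ∀ e ∈ R, e ∈ G.edgeSet ∧ e ∉ T.edges := by
      intro e he
      rw [hR, List.mem_filter] at he
      exact ⟨hfin.mem_toFinset.1 (Finset.mem_toList.1 he.1), by simpa using he.2⟩
    obtain ⟨l, hlnd, hlmem, hlch, _⟩ := insert_edges T R
      (fun e he => hdom e (hRprop e he).1) (fun e he => (hRprop e he).2)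
      ((Finset.nodup_toList _).filter _) htr
    have hlG : ∀ e ∈ l, e ∈ G.edgeSet := by
      intro e he
      rcases (hlmem e).1 he with h | h
      · exact (hRprop e h).1
      · exact T.edges_subset_edgeSet h
    have hlall : ∀ e ∈ G.edgeSet, e ∈ l := by
      intro e he
      by_cases hT : e ∈ T.edges
      · exact (hlmem e).2 (Or.inr hT)
      · refine (hlmem e).2 (Or.inl ?_)
        rw [hR, List.mem_filter]
        exact ⟨Finset.mem_toList.2 (hfin.mem_toFinset.2 he), by simpa using hT⟩
    set ls : List G.edgeSet := l.pmap (fun e he => (⟨e, he⟩ : G.edgeSet)) hlG with hls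
    have hlsnd : ls.Nodup := hlnd.pmap (fun a _ b _ h => congrArg Subtype.val h)
    have hlsch : ls.Chain' G.lineGraph.Adj := by
      have hpair : l.Pairwise (fun a b => a ≠ b) :=
        hlnd.pairwise_of_forall_ne (fun a _ b _ h => h)
      refine chain'_pmap _ ?_ l hlG (chain'_and_pairwise hlch hpair)
      rintro a ha b hb ⟨⟨x, hx1, hx2⟩, hne'⟩
      exact lineGraph_adj_iff_exists.2 ⟨by simpa using hne', x, hx1, hx2⟩
    have hlsall : ∀ w : G.edgeSet, w ∈ ls := by
      rintro ⟨e, he⟩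
      rw [hls, List.mem_pmap]
      exact ⟨e, hlall e he, rfl⟩
    cases hcase : ls with
    | nil => exact absurd (hcase ▸ hlsall ⟨hne.choose, hne.choose_spec⟩) List.not_mem_nil
    | cons a rest =>
      obtain ⟨b, q, hq⟩ := walk_of_chain G.lineGraph rest a (by
        have := hlsch; rw [hcase] at this; exact this)
      refine ⟨a, b, q, Walk.IsPath.mk' ?_, ?_⟩
      · rw [hq, ← hcase]; exact hlsnd
      · intro w; rw [hq, ← hcase]; exact hlsall w
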